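/- With the tensor-train projection setup (tensor A ∈ ℝ^{I₁×⋯×I_N}, orthonormal matrices Q₁,…,Q_{N−1}, the recursively defined matrices A₁,…,A_{N−1}, and the TT reconstruction B), the squared Frobenius-norm approximation error satisfies ‖A − B‖_F² ≤ Σ_{n=1}^{N−1} (‖A_n‖_F² − ‖Q_nᵀA_n‖_F²). -/

import Mathlib

open Matrix
open scoped BigOperators

noncomputable section

/-- Frobenius norm of a real matrix. -/
def frobNorm {m n : ℕ} (A : Matrix (Fin m) (Fin n) ℝ) : ℝ :=
  Real.sqrt (∑ i, ∑ j, A i j ^ 2)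

/-- Nonincreasing rearrangement of a finite tuple of reals. -/
def sortedDesc {n : ℕ} (f : Fin n → ℝ) : Fin n → ℝ :=
  fun k => - ((fun i => - f i) ∘ Tuple.sort (fun i => - f i)) k

/-- `sval A k` is the `(k+1)`-st largest singular value of `A` (i.e. 0-based index `k`),
the square root of the `(k+1)`-st largest eigenvalue of `AᵀA`; it is `0` for `k ≥ n`
(in particular for `k ≥ min m n`). -/
def sval {m n : ℕ} (A : Matrix (Fin m) (Fin n) ℝ) (k : ℕ) : ℝ :=
  if h : k < n then
    Real.sqrt (sortedDesc (show (Aᵀ * A).IsHermitian by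
      rw [← Matrix.conjTranspose_eq_transpose_of_trivial]
      exact Matrix.isHermitian_conjTranspose_mul_self A).eigenvalues ⟨k, h⟩)
  else 0

/-- Spectral norm (ℓ²→ℓ² operator norm) of a real matrix: its largest singular value. -/
def specNorm {m n : ℕ} (A : Matrix (Fin m) (Fin n) ℝ) : ℝ := sval A 0

/-- `tailDelta A μ = Δ_{μ+1}(A) = sqrt (Σ_{k=μ+1}^{min(m,n)} σ_k(A)²)` (with 1-based σ's,
so 0-based indices `μ, …, min m n - 1`). -/
def tailDelta {m n : ℕ} (A : Matrix (Fin m) (Fin n) ℝ) (μ : ℕ) : ℝ :=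
  Real.sqrt (∑ k ∈ Finset.Ico μ (min m n), sval A k ^ 2)

end

noncomputable section

/-- Value of a dependent tuple at a natural-number position (`0` out of range). -/
def pv {N : ℕ} {g : Fin N → ℕ} (x : (k : Fin N) → Fin (g k)) (k : ℕ) : ℕ :=
  if h : k < N then (x ⟨k, h⟩ : ℕ) else 0

/-- Mixed-radix (little-endian, MATLAB-style) linearization of the components `a, …, b-1`
(0-based) of a multi-index `x` of a tensor with dimensions `I 1, …, I N`
(the 0-based component `k` has dimension `I (k+1)`):
`ttCode I x a b = Σ_{k∈[a,b)} x_k · Π_{t∈[a,k)} I (t+1)`. -/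
def ttCode (I : ℕ → ℕ) {N : ℕ} (x : (k : Fin N) → Fin (I ((k : ℕ) + 1))) (a b : ℕ) : ℕ :=
  ∑ k ∈ Finset.Ico a b, pv x k * ∏ t ∈ Finset.Ico a k, I (t + 1)

/-- Frobenius norm of a tensor: square root of the sum of squares of all entries. -/
def tnorm {N : ℕ} {g : Fin N → ℕ} (T : ((k : Fin N) → Fin (g k)) → ℝ) : ℝ :=
  Real.sqrt (∑ x, T x ^ 2)

/-- Entry of a matrix at natural-number positions (`0` out of range). -/
def matExt {p q : ℕ} (M : Matrix (Fin p) (Fin q) ℝ) (a b : ℕ) : ℝ :=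
  if h : a < p ∧ b < q then M ⟨a, h.1⟩ ⟨b, h.2⟩ else 0

end
open Finset

section Aux

lemma nat_decomp {a a' m c c' : ℕ} (ha : a < m) (ha' : a' < m)
    (h : a + m * c = a' + m * c') : a = a' ∧ c = c' := by
  have h1 : (a + m * c) % m = a := by simp [Nat.mod_eq_of_lt ha]
  have h2 : (a' + m * c') % m = a' := by simp [Nat.mod_eq_of_lt ha']
  have h3 : (a + m * c) / m = c := by
    rw [Nat.add_mul_div_left _ _ ((by omega : 0 < m)), Nat.div_eq_of_lt ha]
    omega
  have h4 : (a' + m * c') / m = c' := by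
    rw [Nat.add_mul_div_left _ _ ((by omega : 0 < m)), Nat.div_eq_of_lt ha']
    omega
  constructor
  · rw [← h1, ← h2, h]
  · rw [← h3, ← h4, h]

lemma nat_lt_mul {a m c P : ℕ} (ha : a < m) (hc : c < P) : a + m * c < m * P :=
  calc a + m * c < m + m * c := by omega
    _ = m * (c + 1) := by ring
    _ ≤ m * P := Nat.mul_le_mul_left m hc

lemma sum_range_mul_split (m p : ℕ) (f : ℕ → ℝ) :
    ∑ a ∈ Finset.range (m * p), f a
      = ∑ t ∈ Finset.range m, ∑ i ∈ Finset.range p, f (t + m * i) := by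
  induction p with
  | zero => simp
  | succ p ih =>
      have hmp : m * (p + 1) = m * p + m := by ring
      have split : ∑ a ∈ Finset.range (m * p + m), f a
          = ∑ a ∈ Finset.range (m * p), f a + ∑ k ∈ Finset.range m, f (m * p + k) := by
        rw [← Finset.sum_range_add_sum_Ico f (Nat.le_add_right (m*p) m),
          Finset.sum_Ico_eq_sum_range]
        have h2 : m * p + m - m * p = m := by omega
        rw [h2]
      rw [hmp, split, ih, ← Finset.sum_add_distrib]
      refine Finset.sum_congr rfl fun t ht => ?_
      rw [Finset.sum_range_succ]
      congr 1
      congr 1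
      omega

end Aux

section Aux2
variable {I : ℕ → ℕ} {N : ℕ}

lemma pv_lt (x : (k : Fin N) → Fin (I ((k : ℕ) + 1))) {k : ℕ} (hk : k < N) :
    pv x k < I (k + 1) := by
  rw [pv, dif_pos hk]; exact (x ⟨k, hk⟩).isLt

lemma ttCode_nil (x : (k : Fin N) → Fin (I ((k : ℕ) + 1))) {n : ℕ} (h : N ≤ n) :
    ttCode I x n N = 0 := by
  rw [ttCode, Finset.Ico_eq_empty (by omega), Finset.sum_empty]

lemma ttCode_succ (x : (k : Fin N) → Fin (I ((k : ℕ) + 1))) {n : ℕ} (h : n < N) :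
    ttCode I x n N = pv x n + I (n + 1) * ttCode I x (n + 1) N := by
  rw [ttCode, Finset.sum_eq_sum_Ico_succ_bot h]
  rw [Finset.Ico_eq_empty (by omega : ¬ n < n), Finset.prod_empty, mul_one]
  congr 1
  rw [ttCode, Finset.mul_sum]
  refine Finset.sum_congr rfl fun k hk => ?_
  rw [Finset.mem_Ico] at hk
  rw [Finset.prod_eq_prod_Ico_succ_bot (by omega : n < k)]
  ring

lemma ttCode_lt (x : (k : Fin N) → Fin (I ((k : ℕ) + 1))) :
    ∀ d n, N ≤ n + d → ttCode I x n N < ∏ t ∈ Finset.Ico n N, I (t + 1) := by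
  intro d
  induction d with
  | zero =>
      intro n hn
      rw [ttCode_nil x (by omega), Finset.Ico_eq_empty (by omega), Finset.prod_empty]
      omega
  | succ d ih =>
      intro n hn
      by_cases h : N ≤ n
      · rw [ttCode_nil x h, Finset.Ico_eq_empty (by omega), Finset.prod_empty]; omega
      · push_neg at h
        rw [ttCode_succ x h, Finset.prod_eq_prod_Ico_succ_bot h]
        exact nat_lt_mul (pv_lt x h) (ih (n + 1) (by omega))

lemma prodIco_split {n : ℕ} (h : n < N) :
    ∏ t ∈ Finset.Ico n N, I (t + 1) = I (n + 1) * ∏ t ∈ Finset.Ico (n + 1) N, I (t + 1) :=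
  Finset.prod_eq_prod_Ico_succ_bot h _

lemma ttCode_last (x : (k : Fin N) → Fin (I ((k : ℕ) + 1))) (h : 1 ≤ N) :
    ttCode I x (N - 1) N = pv x (N - 1) := by
  rw [ttCode_succ x (by omega)]
  have : N - 1 + 1 = N := by omega
  rw [this, ttCode_nil x le_rfl]
  ring

end Aux2

section Aux3
variable {p q k : ℕ}

lemma matExt_eq (M : Matrix (Fin p) (Fin q) ℝ) {a b : ℕ} (ha : a < p) (hb : b < q) :
    matExt M a b = M ⟨a, ha⟩ ⟨b, hb⟩ := dif_pos ⟨ha, hb⟩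

lemma matExt_zero (M : Matrix (Fin p) (Fin q) ℝ) {a b : ℕ} (h : ¬ (a < p ∧ b < q)) :
    matExt M a b = 0 := dif_neg h

lemma matExt_transpose_mul (P : Matrix (Fin p) (Fin k) ℝ) (M : Matrix (Fin p) (Fin q) ℝ)
    (s b : ℕ) :
    matExt (Pᵀ * M) s b = ∑ a ∈ Finset.range p, matExt P a s * matExt M a b := by
  by_cases h : s < k ∧ b < q
  · rw [matExt_eq _ h.1 h.2, Matrix.mul_apply]
    rw [← Fin.sum_univ_eq_sum_range (fun a => matExt P a s * matExt M a b) p]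
    refine Finset.sum_congr rfl fun a _ => ?_
    rw [matExt_eq P a.isLt h.1, matExt_eq M a.isLt h.2, Matrix.transpose_apply]
  · rw [matExt_zero _ h]
    refine (Finset.sum_eq_zero fun a ha => ?_).symm
    rw [Finset.mem_range] at ha
    rcases not_and_or.1 h with h' | h'
    · rw [matExt_zero P (fun hc => h' hc.2), zero_mul]
    · rw [matExt_zero M (fun hc => h' hc.2), mul_zero]

lemma orthSum {P : Matrix (Fin p) (Fin k) ℝ} (hP : Pᵀ * P = 1) (s s' : ℕ) :
    ∑ a ∈ Finset.range p, matExt P a s * matExt P a s'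
      = if s = s' ∧ s < k then 1 else 0 := by
  rw [← matExt_transpose_mul, hP]
  by_cases h : s < k ∧ s' < k
  · rw [matExt_eq _ h.1 h.2, Matrix.one_apply]
    by_cases hss : s = s'
    · simp [hss, Fin.ext_iff, h.2]
    · simp [hss, Fin.ext_iff]
  · rw [matExt_zero _ h]
    rcases not_and_or.1 h with h' | h'
    · simp [h']
    · have : ¬ (s = s' ∧ s < k) := fun hc => h' (hc.1 ▸ hc.2)
      simp [this]

lemma frobSq_eq (M : Matrix (Fin p) (Fin q) ℝ) :
    ∑ i, ∑ j, M i j ^ 2 = ∑ a ∈ Finset.range p, ∑ b ∈ Finset.range q, matExt M a b ^ 2 := by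
  rw [← Fin.sum_univ_eq_sum_range (fun a => ∑ b ∈ Finset.range q, matExt M a b ^ 2) p]
  refine Finset.sum_congr rfl fun a _ => ?_
  rw [← Fin.sum_univ_eq_sum_range (fun b => matExt M (a : ℕ) b ^ 2) q]
  refine Finset.sum_congr rfl fun b _ => ?_
  rw [matExt_eq M a.isLt b.isLt]

end Aux3


section Aux4

lemma ttCode_inj (I : ℕ → ℕ) {N : ℕ} (x x' : (k : Fin N) → Fin (I ((k : ℕ) + 1))) :
    ∀ d n, N ≤ n + d → ttCode I x n N = ttCode I x' n N →
      ∀ (k : Fin N), n ≤ (k : ℕ) → x k = x' k := by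
  intro d
  induction d with
  | zero => intro n hn _ k hk; exact absurd k.isLt (by omega)
  | succ d ih =>
      intro n hn hc k hk
      by_cases h : N ≤ n
      · exact absurd k.isLt (by omega)
      push_neg at h
      rw [ttCode_succ x h, ttCode_succ x' h] at hc
      obtain ⟨h1, h2⟩ := nat_decomp (pv_lt x h) (pv_lt x' h) hc
      rcases Nat.lt_or_ge n (k : ℕ) with hnk | hnk
      · exact ih (n + 1) (by omega) h2 k (by omega)
      · have hkn : (k : ℕ) = n := by omega
        have hkF : k = ⟨n, h⟩ := Fin.ext hkn
        rw [hkF]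
        apply Fin.ext
        have e1 : ((x ⟨n, h⟩ : ℕ)) = pv x n := by rw [pv, dif_pos h]
        have e2 : ((x' ⟨n, h⟩ : ℕ)) = pv x' n := by rw [pv, dif_pos h]
        rw [e1, e2, h1]

lemma sum_split (I : ℕ → ℕ) {N : ℕ} (hN : 0 < N) (g : ℕ → ℕ → ℝ) :
    ∑ x : (k : Fin N) → Fin (I ((k : ℕ) + 1)), g (pv x 0) (ttCode I x 1 N)
      = ∑ i ∈ Finset.range (I 1),
          ∑ c ∈ Finset.range (∏ t ∈ Finset.Ico 1 N, I (t + 1)), g i c := by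
  have hb : ∀ x : (k : Fin N) → Fin (I ((k : ℕ) + 1)),
      ttCode I x 1 N < ∏ t ∈ Finset.Ico 1 N, I (t + 1) :=
    fun x => ttCode_lt x N 1 (by omega)
  have hp : ∀ x : (k : Fin N) → Fin (I ((k : ℕ) + 1)), pv x 0 < I 1 :=
    fun x => pv_lt x hN
  set P := ∏ t ∈ Finset.Ico 1 N, I (t + 1) with hP
  let φ : ((k : Fin N) → Fin (I ((k : ℕ) + 1))) → Fin (I 1) × Fin P :=
    fun x => (⟨pv x 0, hp x⟩, ⟨ttCode I x 1 N, hb x⟩)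
  have hinj : Function.Injective φ := by
    intro x x' hxx
    have h1 : pv x 0 = pv x' 0 := congrArg (fun p => (p.1 : ℕ)) hxx
    have h2 : ttCode I x 1 N = ttCode I x' 1 N := congrArg (fun p => (p.2 : ℕ)) hxx
    funext k
    rcases Nat.eq_zero_or_pos (k : ℕ) with hk | hk
    · have hkF : k = ⟨0, hN⟩ := Fin.ext hk
      rw [hkF]
      apply Fin.ext
      have e1 : ((x ⟨0, hN⟩ : ℕ)) = pv x 0 := by rw [pv, dif_pos hN]
      have e2 : ((x' ⟨0, hN⟩ : ℕ)) = pv x' 0 := by rw [pv, dif_pos hN]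
      rw [e1, e2, h1]
    · exact ttCode_inj I x x' N 1 (by omega) h2 k hk
  have hcard : Fintype.card ((k : Fin N) → Fin (I ((k : ℕ) + 1)))
      = Fintype.card (Fin (I 1) × Fin P) := by
    rw [Fintype.card_pi, Fintype.card_prod, Fintype.card_fin, Fintype.card_fin]
    have e : ∏ k : Fin N, Fintype.card (Fin (I ((k : ℕ) + 1))) = ∏ k : Fin N, I ((k : ℕ) + 1) := by
      simp
    rw [e, Fin.prod_univ_eq_prod_range (fun k => I (k + 1)) N, Finset.range_eq_Ico, hP,
      Finset.prod_eq_prod_Ico_succ_bot hN]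
  have hbij : Function.Bijective φ := (Fintype.bijective_iff_injective_and_card φ).2 ⟨hinj, hcard⟩
  rw [Fintype.sum_bijective φ hbij _ (fun p => g (p.1 : ℕ) (p.2 : ℕ)) (fun x => rfl),
    Fintype.sum_prod_type]
  rw [← Fin.sum_univ_eq_sum_range (fun i => ∑ c ∈ Finset.range P, g i c) (I 1)]
  refine Finset.sum_congr rfl fun i _ => ?_
  rw [← Fin.sum_univ_eq_sum_range (fun c => g (i : ℕ) c) P]

end Aux4

noncomputable def PhiTT (I r : ℕ → ℕ)
    (Q : (n : ℕ) → Matrix (Fin (r (n - 1) * I n)) (Fin (r n)) ℝ)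
    {N : ℕ} (x : (k : Fin N) → Fin (I ((k : ℕ) + 1))) : ℕ → ℕ → ℝ
  | 0, s => if s < r 0 then 1 else 0
  | (n + 1), s => ∑ t ∈ Finset.range (r n),
      PhiTT I r Q x n t * matExt (Q (n + 1)) (t + r n * pv x n) s

lemma perx (I : ℕ → ℕ) {N : ℕ} (x : (k : Fin N) → Fin ((I ((k : ℕ) + 1)))) {n b' : ℕ}
    (hn : n < N) (u : ℕ → ℝ) :
    ∑ i ∈ Finset.range (I (n + 1)),
        (if ttCode I x n N = i + I (n + 1) * b' then u i else 0)
      = if ttCode I x (n + 1) N = b' then u (pv x n) else 0 := by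
  by_cases hc : ttCode I x (n + 1) N = b'
  · rw [if_pos hc]
    rw [Finset.sum_eq_single_of_mem (pv x n) (Finset.mem_range.2 (pv_lt x hn))]
    · rw [if_pos]; rw [ttCode_succ x hn, hc]
    · intro i hi hne
      rw [if_neg]
      intro hcc
      rw [ttCode_succ x hn] at hcc
      exact hne (nat_decomp (pv_lt x hn) (Finset.mem_range.1 hi) hcc).1.symm
  · rw [if_neg hc]
    refine Finset.sum_eq_zero fun i hi => ?_
    rw [if_neg]
    intro hcc
    rw [ttCode_succ x hn] at hcc
    exact hc (nat_decomp (pv_lt x hn) (Finset.mem_range.1 hi) hcc).2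

lemma pv_snoc_lt {n : ℕ} {g : Fin (n + 1) → ℕ} (j : (i : Fin n) → Fin (g i.castSucc))
    (t : Fin (g (Fin.last n))) {k : ℕ} (hk : k < n) :
    pv (Fin.snoc j t) k = pv j k := by
  rw [pv, pv, dif_pos (by omega : k < n + 1), dif_pos hk]
  have h : (⟨k, by omega⟩ : Fin (n + 1)) = (⟨k, hk⟩ : Fin n).castSucc := rfl
  rw [h, Fin.snoc_castSucc]

lemma pv_snoc_last {n : ℕ} {g : Fin (n + 1) → ℕ} (j : (i : Fin n) → Fin (g i.castSucc))
    (t : Fin (g (Fin.last n))) :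
    pv (Fin.snoc j t) n = (t : ℕ) := by
  rw [pv, dif_pos (by omega : n < n + 1)]
  have h : (⟨n, by omega⟩ : Fin (n + 1)) = Fin.last n := rfl
  rw [h, Fin.snoc_last]

lemma pv_empty {g : Fin 0 → ℕ} (j : (i : Fin 0) → Fin (g i)) (k : ℕ) : pv j k = 0 := by
  rw [pv, dif_neg (by omega)]

lemma unroll (I r : ℕ → ℕ) (hr0 : r 0 = 1)
    (Q : (n : ℕ) → Matrix (Fin (r (n - 1) * I n)) (Fin (r n)) ℝ)
    {N : ℕ} (x : (k : Fin N) → Fin (I ((k : ℕ) + 1))) :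
    ∀ n (F : ℕ → ℝ),
      (∑ j : (nn : Fin n) → Fin (r ((nn : ℕ) + 1)),
        (∏ nn ∈ Finset.range n,
          matExt (Q (nn + 1)) ((if nn = 0 then 0 else pv j (nn - 1)) + r nn * pv x nn)
            (pv j nn)) * F (pv j (n - 1)))
      = ∑ s ∈ Finset.range (r n), PhiTT I r Q x n s * F s := by
  intro n
  induction n with
  | zero =>
      intro F
      rw [Fintype.sum_unique]
      rw [Finset.prod_range_zero, one_mul, pv_empty]
      rw [hr0, Finset.sum_range_one]
      have h1 : PhiTT I r Q x 0 0 = 1 := by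
        show (if 0 < r 0 then (1:ℝ) else 0) = 1
        rw [if_pos (by omega)]
      rw [h1, one_mul]
  | succ n ih =>
      intro F
      have e0 : (∑ j : (nn : Fin (n + 1)) → Fin (r ((nn : ℕ) + 1)),
            (∏ nn ∈ Finset.range (n + 1),
              matExt (Q (nn + 1)) ((if nn = 0 then 0 else pv j (nn - 1)) + r nn * pv x nn)
                (pv j nn)) * F (pv j (n + 1 - 1)))
          = ∑ t : Fin (r (n + 1)),
              ∑ j' : (i : Fin n) → Fin (r ((i.castSucc : ℕ) + 1)),
              (∏ nn ∈ Finset.range (n + 1),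
                matExt (Q (nn + 1))
                  ((if nn = 0 then 0 else
                      pv (Fin.snoc (α := fun k : Fin (n + 1) => Fin (r ((k : ℕ) + 1))) j' t)
                        (nn - 1)) + r nn * pv x nn)
                  (pv (Fin.snoc (α := fun k : Fin (n + 1) => Fin (r ((k : ℕ) + 1))) j' t) nn)) *
              F (pv (Fin.snoc (α := fun k : Fin (n + 1) => Fin (r ((k : ℕ) + 1))) j' t)
                  (n + 1 - 1)) := by
        rw [← Equiv.sum_comp (Fin.snocEquiv (fun k : Fin (n + 1) => Fin (r ((k : ℕ) + 1))))
          (fun j => (∏ nn ∈ Finset.range (n + 1),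
            matExt (Q (nn + 1)) ((if nn = 0 then 0 else pv j (nn - 1)) + r nn * pv x nn)
              (pv j nn)) * F (pv j (n + 1 - 1))), Fintype.sum_prod_type]
        rfl
      rw [e0]
      refine Eq.trans (Finset.sum_congr rfl fun t _ => ?_)
        (Fin.sum_univ_eq_sum_range (fun s => PhiTT I r Q x (n + 1) s * F s) (r (n + 1)))
      have key : ∀ j' : (i : Fin n) → Fin (r ((i.castSucc : ℕ) + 1)),
          (∏ nn ∈ Finset.range (n + 1),
              matExt (Q (nn + 1))
                ((if nn = 0 then 0 else
                    pv (Fin.snoc (α := fun k : Fin (n + 1) => Fin (r ((k : ℕ) + 1))) j' t) (nn - 1))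
                  + r nn * pv x nn)
                (pv (Fin.snoc (α := fun k : Fin (n + 1) => Fin (r ((k : ℕ) + 1))) j' t) nn)) *
            F (pv (Fin.snoc (α := fun k : Fin (n + 1) => Fin (r ((k : ℕ) + 1))) j' t) (n + 1 - 1))
          = (∏ nn ∈ Finset.range n,
                matExt (Q (nn + 1)) ((if nn = 0 then 0 else pv j' (nn - 1)) + r nn * pv x nn)
                  (pv j' nn)) *
              ((fun c => matExt (Q (n + 1)) ((if n = 0 then 0 else c) + r n * pv x n) (t : ℕ))
                  (pv j' (n - 1)) * F (t : ℕ)) := by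
        intro j'
        simp only [Nat.add_sub_cancel]
        have hlast : pv (Fin.snoc (α := fun k : Fin (n + 1) => Fin (r ((k : ℕ) + 1))) j' t) n
            = (t : ℕ) := pv_snoc_last (g := fun k : Fin (n + 1) => r ((k : ℕ) + 1)) j' t
        rw [Finset.prod_range_succ, hlast]
        have hfacn : matExt (Q (n + 1))
            ((if n = 0 then 0 else
                pv (Fin.snoc (α := fun k : Fin (n + 1) => Fin (r ((k : ℕ) + 1))) j' t) (n - 1))
              + r n * pv x n) (t : ℕ)
          = (fun c => matExt (Q (n + 1)) ((if n = 0 then 0 else c) + r n * pv x n) (t : ℕ))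
              (pv j' (n - 1)) := by
          rcases Nat.eq_zero_or_pos n with hn0 | hn0
          · subst hn0; rfl
          · rw [pv_snoc_lt (g := fun k : Fin (n + 1) => r ((k : ℕ) + 1)) j' t
              (by omega : n - 1 < n)]
        rw [hfacn]
        have hfac : ∀ nn ∈ Finset.range n,
            matExt (Q (nn + 1))
              ((if nn = 0 then 0 else
                  pv (Fin.snoc (α := fun k : Fin (n + 1) => Fin (r ((k : ℕ) + 1))) j' t) (nn - 1))
                + r nn * pv x nn)
              (pv (Fin.snoc (α := fun k : Fin (n + 1) => Fin (r ((k : ℕ) + 1))) j' t) nn)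
            = matExt (Q (nn + 1)) ((if nn = 0 then 0 else pv j' (nn - 1)) + r nn * pv x nn)
                (pv j' nn) := by
          intro nn hnn
          have hnn' := Finset.mem_range.1 hnn
          rw [pv_snoc_lt (g := fun k : Fin (n + 1) => r ((k : ℕ) + 1)) j' t hnn']
          rcases Nat.eq_zero_or_pos nn with h0 | h0
          · subst h0; rfl
          · rw [pv_snoc_lt (g := fun k : Fin (n + 1) => r ((k : ℕ) + 1)) j' t
              (by omega : nn - 1 < n)]
        rw [Finset.prod_congr rfl hfac]
        ring
      rw [Finset.sum_congr rfl fun j' _ => key j']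
      have assoc : ∀ j' : (i : Fin n) → Fin (r ((i.castSucc : ℕ) + 1)),
          (∏ nn ∈ Finset.range n,
              matExt (Q (nn + 1)) ((if nn = 0 then 0 else pv j' (nn - 1)) + r nn * pv x nn)
                (pv j' nn)) *
            ((fun c => matExt (Q (n + 1)) ((if n = 0 then 0 else c) + r n * pv x n) (t : ℕ))
                (pv j' (n - 1)) * F (t : ℕ))
          = ((∏ nn ∈ Finset.range n,
              matExt (Q (nn + 1)) ((if nn = 0 then 0 else pv j' (nn - 1)) + r nn * pv x nn)
                (pv j' nn)) *
            (fun c => matExt (Q (n + 1)) ((if n = 0 then 0 else c) + r n * pv x n) (t : ℕ))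
              (pv j' (n - 1))) * F (t : ℕ) := by
        intro j'; ring
      rw [Finset.sum_congr rfl fun j' _ => assoc j', ← Finset.sum_mul]
      have hsum : (∑ j' : (i : Fin n) → Fin (r ((i.castSucc : ℕ) + 1)),
            (∏ nn ∈ Finset.range n,
              matExt (Q (nn + 1)) ((if nn = 0 then 0 else pv j' (nn - 1)) + r nn * pv x nn)
                (pv j' nn)) *
            (fun c => matExt (Q (n + 1)) ((if n = 0 then 0 else c) + r n * pv x n) (t : ℕ))
              (pv j' (n - 1)))
          = ∑ s ∈ Finset.range (r n), PhiTT I r Q x n s *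
              (fun c => matExt (Q (n + 1)) ((if n = 0 then 0 else c) + r n * pv x n) (t : ℕ)) s :=
        ih (fun c => matExt (Q (n + 1)) ((if n = 0 then 0 else c) + r n * pv x n) (t : ℕ))
      rw [hsum]
      congr 1
      have hPhi : PhiTT I r Q x (n + 1) (t : ℕ)
          = ∑ s ∈ Finset.range (r n),
              PhiTT I r Q x n s * matExt (Q (n + 1)) (s + r n * pv x n) (t : ℕ) := rfl
      rw [hPhi]
      refine Finset.sum_congr rfl fun s hs => ?_
      rcases Nat.eq_zero_or_pos n with hn0 | hn0
      · subst hn0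
        have hs' : s = 0 := by
          have h1 := Finset.mem_range.1 hs
          rw [hr0] at h1
          omega
        rw [hs']
        norm_num
      · have hne : ¬ (n = 0) := by omega
        simp only [hne, if_false]


/-- TT projection squared error bound:
`‖A − B‖_F² ≤ Σ_{n=1}^{N−1} (‖A_n‖_F² − ‖Q_nᵀ A_n‖_F²)`. -/
theorem tt_error_sq_le_sum
    (N : ℕ) (hN : 2 ≤ N)
    -- dimensions `I 1, …, I N` and TT-ranks `r 0 = μ₀ = 1, r 1 = μ₁, …, r N = μ_N = 1`
    (I r : ℕ → ℕ) (hr0 : r 0 = 1) (hrN : r N = 1) (hrpos : ∀ n ≤ N, 0 < r n)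
    -- the tensor `A ∈ ℝ^{I₁ × ⋯ × I_N}` (0-based component `k` is the paper index `i_{k+1}`)
    (A : ((k : Fin N) → Fin (I ((k : ℕ) + 1))) → ℝ)
    -- the orthonormal matrices `Q n ∈ ℝ^{μ_{n-1} I_n × μ_n}` for `n = 1, …, N-1`
    (Q : (n : ℕ) → Matrix (Fin (r (n - 1) * I n)) (Fin (r n)) ℝ)
    (hQ : ∀ n, 1 ≤ n → n ≤ N - 1 → (Q n)ᵀ * Q n = 1)
    -- the matrices `A_n ∈ ℝ^{μ_{n-1} I_n × (I_{n+1} ⋯ I_N)}` for `n = 1, …, N-1`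
    (Amat : (n : ℕ) →
      Matrix (Fin (r (n - 1) * I n)) (Fin (∏ t ∈ Finset.Ico n N, I (t + 1))) ℝ)
    -- `A₁` is the first unfolding `A_{([1])}` of `A`
    (hA1 : ∀ (x : (k : Fin N) → Fin (I ((k : ℕ) + 1))) (a : Fin (r 0 * I 1))
      (b : Fin (∏ t ∈ Finset.Ico 1 N, I (t + 1))),
      (a : ℕ) = pv x 0 → (b : ℕ) = ttCode I x 1 N → Amat 1 a b = A x)
    -- for `n = 2, …, N-1`, `A_n` is the reshaping of `Q_{n-1}ᵀ A_{n-1}` merging the row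
    -- index with the `I_n` index:  `A_n(s + μ_{n-1} i, j) = (Q_{n-1}ᵀ A_{n-1})(s, i + I_n j)`
    (hrec : ∀ n, 2 ≤ n → n ≤ N - 1 →
      ∀ (s : Fin (r (n - 1))) (i : Fin (I n)) (j : Fin (∏ t ∈ Finset.Ico n N, I (t + 1)))
        (a : Fin (r (n - 1) * I n)) (b : Fin (∏ t ∈ Finset.Ico (n - 1) N, I (t + 1))),
        (a : ℕ) = (s : ℕ) + r (n - 1) * (i : ℕ) →
        (b : ℕ) = (i : ℕ) + I n * (j : ℕ) →
        Amat n a j = ((Q (n - 1))ᵀ * Amat (n - 1)) s b)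
    -- the TT reconstruction `B`, with entries
    -- `B(i₁,…,i_N) = Σ_{j₁,…,j_{N-1}} Q₁(i₁,j₁) Q₂(j₁+μ₁ i₂, j₂) ⋯
    --      Q_{N-1}(j_{N-2}+μ_{N-2} i_{N-1}, j_{N-1}) · (Q_{N-1}ᵀ A_{N-1})(j_{N-1}, i_N)`
    (B : ((k : Fin N) → Fin (I ((k : ℕ) + 1))) → ℝ)
    (hB : ∀ x, B x =
      ∑ j : (nn : Fin (N - 1)) → Fin (r ((nn : ℕ) + 1)),
        (∏ nn ∈ Finset.range (N - 1),
          matExt (Q (nn + 1)) ((if nn = 0 then 0 else pv j (nn - 1)) + r nn * pv x nn)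
            (pv j nn)) *
          matExt ((Q (N - 1))ᵀ * Amat (N - 1)) (pv j (N - 2)) (pv x (N - 1)))
    :
    tnorm (fun x => A x - B x) ^ 2 ≤
      ∑ n ∈ Finset.Icc 1 (N - 1),
        (frobNorm (Amat n) ^ 2 - frobNorm ((Q n)ᵀ * Amat n) ^ 2) := by
  -- extended-entry version of hA1
  have hA1' : ∀ x : (k : Fin N) → Fin (I ((k : ℕ) + 1)),
      matExt (Amat 1) (pv x 0) (ttCode I x 1 N) = A x := by
    intro x
    have hp : pv x 0 < r 0 * I 1 := by
      rw [hr0, one_mul]; exact pv_lt x (by omega)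
    have hc : ttCode I x 1 N < ∏ t ∈ Finset.Ico 1 N, I (t + 1) := ttCode_lt x N 1 (by omega)
    rw [matExt_eq _ hp hc]
    exact hA1 x ⟨pv x 0, hp⟩ ⟨ttCode I x 1 N, hc⟩ rfl rfl
  -- extended-entry version of hrec
  have hrec' : ∀ n, 1 ≤ n → n + 1 ≤ N - 1 → ∀ s i b : ℕ, s < r n → i < I (n + 1) →
      b < ∏ t ∈ Finset.Ico (n + 1) N, I (t + 1) →
      matExt (Amat (n + 1)) (s + r n * i) b
        = matExt ((Q n)ᵀ * Amat n) s (i + I (n + 1) * b) := by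
    intro n h1 hn s i b hs hi hb
    have hrow : s + r n * i < r n * I (n + 1) := nat_lt_mul hs hi
    have hcol : i + I (n + 1) * b < ∏ t ∈ Finset.Ico n N, I (t + 1) := by
      rw [prodIco_split (show n < N by omega)]
      exact nat_lt_mul hi hb
    have e1 : matExt (Amat (n + 1)) (s + r n * i) b
        = Amat (n + 1) ⟨s + r n * i, hrow⟩ ⟨b, hb⟩ := matExt_eq _ hrow hb
    have e2 : matExt ((Q n)ᵀ * Amat n) s (i + I (n + 1) * b)
        = ((Q n)ᵀ * Amat n) ⟨s, hs⟩ ⟨i + I (n + 1) * b, hcol⟩ := matExt_eq _ hs hcol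
    rw [e1, e2]
    exact hrec (n + 1) (by omega) (by omega) ⟨s, hs⟩ ⟨i, hi⟩ ⟨b, hb⟩
      ⟨s + r n * i, hrow⟩ ⟨i + I (n + 1) * b, hcol⟩ rfl rfl
  have phi1 : ∀ (x : (k : Fin N) → Fin (I ((k : ℕ) + 1))) (s : ℕ),
      PhiTT I r Q x 1 s = matExt (Q 1) (pv x 0) s := by
    intro x s
    have h : PhiTT I r Q x 1 s
        = ∑ t ∈ Finset.range (r 0), PhiTT I r Q x 0 t * matExt (Q 1) (t + r 0 * pv x 0) s := rfl
    have h0 : PhiTT I r Q x 0 0 = 1 := by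
      show (if 0 < r 0 then (1 : ℝ) else 0) = 1
      rw [if_pos (by omega)]
    have hrange : Finset.range (r 0) = {0} := by rw [hr0]; rfl
    have harg : 0 + r 0 * pv x 0 = pv x 0 := by rw [hr0]; ring
    rw [h, hrange, Finset.sum_singleton, h0, one_mul, harg]
  have claim : ∀ n, 1 ≤ n → n ≤ N - 1 → ∀ s b : ℕ,
      matExt ((Q n)ᵀ * Amat n) s b
        = ∑ x : (k : Fin N) → Fin (I ((k : ℕ) + 1)),
            if ttCode I x n N = b then PhiTT I r Q x n s * A x else 0 := by
    intro n hn1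
    induction n, hn1 using Nat.le_induction with
    | base =>
        intro _ s b
        have hmul : matExt ((Q 1)ᵀ * Amat 1) s b
            = ∑ a ∈ Finset.range (I 1), matExt (Q 1) a s * matExt (Amat 1) a b := by
          refine (matExt_transpose_mul (Q 1) (Amat 1) s b).trans
            (Finset.sum_congr ?_ fun a _ => rfl)
          congr 1
          rw [Nat.sub_self, hr0, one_mul]
        rw [hmul]
        have hstep : ∀ x : (k : Fin N) → Fin (I ((k : ℕ) + 1)),
            (if ttCode I x 1 N = b then PhiTT I r Q x 1 s * A x else 0)
            = (fun i c => if c = b then matExt (Q 1) i s * matExt (Amat 1) i c else 0)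
                (pv x 0) (ttCode I x 1 N) := by
          intro x
          show _ = if ttCode I x 1 N = b then
            matExt (Q 1) (pv x 0) s * matExt (Amat 1) (pv x 0) (ttCode I x 1 N) else 0
          rw [phi1 x s, hA1' x]
        rw [Finset.sum_congr rfl fun x _ => hstep x,
          sum_split I (show 0 < N by omega)
            (fun i c => if c = b then matExt (Q 1) i s * matExt (Amat 1) i c else 0)]
        refine Finset.sum_congr rfl fun i _ => ?_
        rw [Finset.sum_ite_eq' (Finset.range (∏ t ∈ Finset.Ico 1 N, I (t + 1))) b
          (fun c => matExt (Q 1) i s * matExt (Amat 1) i c)]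
        by_cases hb : b < ∏ t ∈ Finset.Ico 1 N, I (t + 1)
        · rw [if_pos (Finset.mem_range.2 hb)]
        · rw [if_neg (fun hmem => hb (Finset.mem_range.1 hmem))]
          rw [matExt_zero (Amat 1) (fun hc => hb hc.2), mul_zero]
    | succ n hn ihn =>
        intro hsucc s b
        have ih := ihn (by omega)
        have hnN : n < N := by omega
        have hmul : matExt ((Q (n + 1))ᵀ * Amat (n + 1)) s b
            = ∑ a ∈ Finset.range (r n * I (n + 1)),
                matExt (Q (n + 1)) a s * matExt (Amat (n + 1)) a b :=
          matExt_transpose_mul _ _ s b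
        rw [hmul, sum_range_mul_split (r n) (I (n + 1))
          (fun a => matExt (Q (n + 1)) a s * matExt (Amat (n + 1)) a b)]
        by_cases hb : b < ∏ t ∈ Finset.Ico (n + 1) N, I (t + 1)
        · have hA : ∀ t ∈ Finset.range (r n), ∀ i ∈ Finset.range (I (n + 1)),
              matExt (Q (n + 1)) (t + r n * i) s * matExt (Amat (n + 1)) (t + r n * i) b
              = matExt (Q (n + 1)) (t + r n * i) s *
                  (∑ x : (k : Fin N) → Fin (I ((k : ℕ) + 1)),
                    if ttCode I x n N = i + I (n + 1) * b then PhiTT I r Q x n t * A x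
                    else 0) := by
            intro t ht i hi
            rw [hrec' n (by omega) (by omega) t i b (Finset.mem_range.1 ht)
              (Finset.mem_range.1 hi) hb, ih t (i + I (n + 1) * b)]
          rw [Finset.sum_congr rfl fun t ht => Finset.sum_congr rfl fun i hi => hA t ht i hi]
          have swap1 : ∀ t ∈ Finset.range (r n),
              (∑ i ∈ Finset.range (I (n + 1)),
                matExt (Q (n + 1)) (t + r n * i) s *
                  (∑ x : (k : Fin N) → Fin (I ((k : ℕ) + 1)),
                    if ttCode I x n N = i + I (n + 1) * b then PhiTT I r Q x n t * A x else 0))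
              = ∑ x : (k : Fin N) → Fin (I ((k : ℕ) + 1)), ∑ i ∈ Finset.range (I (n + 1)),
                  matExt (Q (n + 1)) (t + r n * i) s *
                    (if ttCode I x n N = i + I (n + 1) * b then PhiTT I r Q x n t * A x
                    else 0) := by
            intro t _
            rw [Finset.sum_congr rfl fun i (_ : i ∈ Finset.range (I (n + 1))) =>
              Finset.mul_sum (Finset.univ) (fun x => if ttCode I x n N = i + I (n + 1) * b
                then PhiTT I r Q x n t * A x else 0) (matExt (Q (n + 1)) (t + r n * i) s)]
            exact Finset.sum_comm
          rw [Finset.sum_congr rfl swap1]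
          rw [Finset.sum_comm]
          refine Finset.sum_congr rfl fun x _ => ?_
          have e1 : ∀ i ∈ Finset.range (I (n + 1)),
              (∑ t ∈ Finset.range (r n),
                matExt (Q (n + 1)) (t + r n * i) s *
                  (if ttCode I x n N = i + I (n + 1) * b then PhiTT I r Q x n t * A x else 0))
              = (if ttCode I x n N = i + I (n + 1) * b then
                  (∑ t ∈ Finset.range (r n),
                    PhiTT I r Q x n t * matExt (Q (n + 1)) (t + r n * i) s) * A x
                else 0) := by
            intro i _
            by_cases hc : ttCode I x n N = i + I (n + 1) * b
            · simp only [if_pos hc, Finset.sum_mul]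
              refine Finset.sum_congr rfl fun t _ => ?_
              ring
            · simp only [if_neg hc, mul_zero, Finset.sum_const_zero]
          rw [Finset.sum_comm, Finset.sum_congr rfl e1]
          exact perx I x hnN (fun i =>
            (∑ t ∈ Finset.range (r n),
              PhiTT I r Q x n t * matExt (Q (n + 1)) (t + r n * i) s) * A x)
        · refine Eq.trans (Finset.sum_eq_zero fun t _ => Finset.sum_eq_zero fun i _ => ?_)
            (Finset.sum_eq_zero fun x _ => ?_).symm
          · rw [matExt_zero (Amat (n + 1)) (fun hc => hb hc.2), mul_zero]
          · rw [if_neg]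
            intro hcc
            exact hb (hcc ▸ ttCode_lt x N (n + 1) (by omega))
  have orth : ∀ n, 1 ≤ n → n ≤ N - 1 → ∀ s s' b : ℕ,
      b < ∏ t ∈ Finset.Ico n N, I (t + 1) →
      (∑ x : (k : Fin N) → Fin (I ((k : ℕ) + 1)),
          if ttCode I x n N = b then PhiTT I r Q x n s * PhiTT I r Q x n s' else 0)
        = if s = s' ∧ s < r n then 1 else 0 := by
    intro n hn1
    induction n, hn1 using Nat.le_induction with
    | base =>
        intro _ s s' b hb
        have hstep : ∀ x : (k : Fin N) → Fin (I ((k : ℕ) + 1)),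
            (if ttCode I x 1 N = b then PhiTT I r Q x 1 s * PhiTT I r Q x 1 s' else 0)
            = (fun i c => if c = b then matExt (Q 1) i s * matExt (Q 1) i s' else 0)
                (pv x 0) (ttCode I x 1 N) := by
          intro x
          show _ = if ttCode I x 1 N = b then
            matExt (Q 1) (pv x 0) s * matExt (Q 1) (pv x 0) s' else 0
          rw [phi1 x s, phi1 x s']
        rw [Finset.sum_congr rfl fun x _ => hstep x,
          sum_split I (show 0 < N by omega)
            (fun i c => if c = b then matExt (Q 1) i s * matExt (Q 1) i s' else 0)]
        have hin : ∀ i ∈ Finset.range (I 1),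
            (∑ c ∈ Finset.range (∏ t ∈ Finset.Ico 1 N, I (t + 1)),
              if c = b then matExt (Q 1) i s * matExt (Q 1) i s' else 0)
            = matExt (Q 1) i s * matExt (Q 1) i s' := by
          intro i _
          rw [Finset.sum_ite_eq' (Finset.range (∏ t ∈ Finset.Ico 1 N, I (t + 1))) b
            (fun c => matExt (Q 1) i s * matExt (Q 1) i s'),
            if_pos (Finset.mem_range.2 hb)]
        rw [Finset.sum_congr rfl hin]
        have ho : (∑ a ∈ Finset.range (I 1), matExt (Q 1) a s * matExt (Q 1) a s')
            = if s = s' ∧ s < r 1 then 1 else 0 := by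
          refine Eq.trans (Finset.sum_congr ?_ fun a _ => rfl)
            (orthSum (hQ 1 le_rfl (by omega)) s s')
          congr 1
          rw [Nat.sub_self, hr0, one_mul]
        exact ho
    | succ n hn ihn =>
        intro hsucc s s' b hb
        have ih := ihn (by omega)
        have hnN : n < N := by omega
        have e1 : ∀ x : (k : Fin N) → Fin (I ((k : ℕ) + 1)),
            (if ttCode I x (n + 1) N = b then
              PhiTT I r Q x (n + 1) s * PhiTT I r Q x (n + 1) s' else 0)
            = ∑ i ∈ Finset.range (I (n + 1)),
                (if ttCode I x n N = i + I (n + 1) * b then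
                  (∑ t ∈ Finset.range (r n),
                    PhiTT I r Q x n t * matExt (Q (n + 1)) (t + r n * i) s) *
                  (∑ t' ∈ Finset.range (r n),
                    PhiTT I r Q x n t' * matExt (Q (n + 1)) (t' + r n * i) s')
                else 0) :=
          fun x => (perx I x hnN (fun i =>
            (∑ t ∈ Finset.range (r n),
              PhiTT I r Q x n t * matExt (Q (n + 1)) (t + r n * i) s) *
            (∑ t' ∈ Finset.range (r n),
              PhiTT I r Q x n t' * matExt (Q (n + 1)) (t' + r n * i) s'))).symm
        rw [Finset.sum_congr rfl fun x _ => e1 x, Finset.sum_comm]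
        have e2 : ∀ i ∈ Finset.range (I (n + 1)),
            (∑ x : (k : Fin N) → Fin (I ((k : ℕ) + 1)),
              (if ttCode I x n N = i + I (n + 1) * b then
                (∑ t ∈ Finset.range (r n),
                  PhiTT I r Q x n t * matExt (Q (n + 1)) (t + r n * i) s) *
                (∑ t' ∈ Finset.range (r n),
                  PhiTT I r Q x n t' * matExt (Q (n + 1)) (t' + r n * i) s')
              else 0))
            = ∑ t ∈ Finset.range (r n),
                matExt (Q (n + 1)) (t + r n * i) s * matExt (Q (n + 1)) (t + r n * i) s' := by
          intro i hi
          have e3 : ∀ x : (k : Fin N) → Fin (I ((k : ℕ) + 1)),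
              (if ttCode I x n N = i + I (n + 1) * b then
                (∑ t ∈ Finset.range (r n),
                  PhiTT I r Q x n t * matExt (Q (n + 1)) (t + r n * i) s) *
                (∑ t' ∈ Finset.range (r n),
                  PhiTT I r Q x n t' * matExt (Q (n + 1)) (t' + r n * i) s')
              else 0)
              = ∑ t ∈ Finset.range (r n), ∑ t' ∈ Finset.range (r n),
                  (matExt (Q (n + 1)) (t + r n * i) s * matExt (Q (n + 1)) (t' + r n * i) s') *
                    (if ttCode I x n N = i + I (n + 1) * b then
                      PhiTT I r Q x n t * PhiTT I r Q x n t' else 0) := by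
            intro x
            by_cases hc : ttCode I x n N = i + I (n + 1) * b
            · simp only [if_pos hc, Finset.sum_mul_sum]
              refine Finset.sum_congr rfl fun t _ => Finset.sum_congr rfl fun t' _ => ?_
              ring
            · simp only [if_neg hc, mul_zero, Finset.sum_const_zero]
          rw [Finset.sum_congr rfl fun x _ => e3 x, Finset.sum_comm]
          have e4 : ∀ t ∈ Finset.range (r n),
              (∑ x : (k : Fin N) → Fin (I ((k : ℕ) + 1)),
                ∑ t' ∈ Finset.range (r n),
                  (matExt (Q (n + 1)) (t + r n * i) s * matExt (Q (n + 1)) (t' + r n * i) s') *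
                    (if ttCode I x n N = i + I (n + 1) * b then
                      PhiTT I r Q x n t * PhiTT I r Q x n t' else 0))
              = matExt (Q (n + 1)) (t + r n * i) s * matExt (Q (n + 1)) (t + r n * i) s' := by
            intro t ht
            rw [Finset.sum_comm]
            have e5 : ∀ t' ∈ Finset.range (r n),
                (∑ x : (k : Fin N) → Fin (I ((k : ℕ) + 1)),
                  (matExt (Q (n + 1)) (t + r n * i) s * matExt (Q (n + 1)) (t' + r n * i) s') *
                    (if ttCode I x n N = i + I (n + 1) * b then
                      PhiTT I r Q x n t * PhiTT I r Q x n t' else 0))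
                = (matExt (Q (n + 1)) (t + r n * i) s * matExt (Q (n + 1)) (t' + r n * i) s') *
                    (if t = t' ∧ t < r n then 1 else 0) := by
              intro t' _
              rw [← Finset.mul_sum]
              congr 1
              exact ih t t' (i + I (n + 1) * b)
                (by rw [prodIco_split hnN]
                    exact nat_lt_mul (Finset.mem_range.1 hi) hb)
            rw [Finset.sum_congr rfl e5]
            rw [Finset.sum_eq_single_of_mem t ht]
            · rw [if_pos ⟨rfl, Finset.mem_range.1 ht⟩, mul_one]
            · intro t' _ hne
              rw [if_neg (fun hc => hne hc.1.symm), mul_zero]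
          rw [Finset.sum_congr rfl e4]
        rw [Finset.sum_congr rfl e2, Finset.sum_comm]
        have hcollapse : (∑ t ∈ Finset.range (r n), ∑ i ∈ Finset.range (I (n + 1)),
            matExt (Q (n + 1)) (t + r n * i) s * matExt (Q (n + 1)) (t + r n * i) s')
            = ∑ a ∈ Finset.range (r n * I (n + 1)),
                matExt (Q (n + 1)) a s * matExt (Q (n + 1)) a s' :=
          (sum_range_mul_split (r n) (I (n + 1))
            (fun a => matExt (Q (n + 1)) a s * matExt (Q (n + 1)) a s')).symm
        rw [hcollapse]
        exact orthSum (hQ (n + 1) (by omega) (by omega)) s s'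
  have hBphi : ∀ x : (k : Fin N) → Fin (I ((k : ℕ) + 1)),
      B x = ∑ s ∈ Finset.range (r (N - 1)),
        PhiTT I r Q x (N - 1) s *
          matExt ((Q (N - 1))ᵀ * Amat (N - 1)) s (pv x (N - 1)) := by
    intro x
    rw [hB x]
    have hu := unroll I r hr0 Q x (N - 1)
      (fun c => matExt ((Q (N - 1))ᵀ * Amat (N - 1)) c (pv x (N - 1)))
    exact hu
  -- squared tensor norm
  have tsq : tnorm (fun x : (k : Fin N) → Fin (I ((k : ℕ) + 1)) => A x - B x) ^ 2
      = ∑ x : (k : Fin N) → Fin (I ((k : ℕ) + 1)), (A x - B x) ^ 2 := by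
    rw [tnorm, Real.sq_sqrt]
    positivity
  have frobsq : ∀ {p q : ℕ} (M : Matrix (Fin p) (Fin q) ℝ), frobNorm M ^ 2
      = ∑ a ∈ Finset.range p, ∑ c ∈ Finset.range q, matExt M a c ^ 2 := by
    intro p q M
    rw [frobNorm, Real.sq_sqrt, frobSq_eq]
    positivity
  -- ∑ A² = ‖A₁‖²
  have hA2 : (∑ x : (k : Fin N) → Fin (I ((k : ℕ) + 1)), A x ^ 2)
      = frobNorm (Amat 1) ^ 2 := by
    have h1 : ∀ x : (k : Fin N) → Fin (I ((k : ℕ) + 1)),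
        A x ^ 2 = (fun i c => matExt (Amat 1) i c ^ 2) (pv x 0) (ttCode I x 1 N) := by
      intro x
      show _ = matExt (Amat 1) (pv x 0) (ttCode I x 1 N) ^ 2
      rw [hA1' x]
    rw [Finset.sum_congr rfl fun x _ => h1 x,
      sum_split I (show 0 < N by omega) (fun i c => matExt (Amat 1) i c ^ 2),
      frobsq (Amat 1)]
    refine (Finset.sum_congr ?_ fun a _ => rfl)
    congr 1
    rw [Nat.sub_self, hr0, one_mul]
  -- ∑ A·B = ∑∑ G²
  have hAB : (∑ x : (k : Fin N) → Fin (I ((k : ℕ) + 1)), A x * B x)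
      = ∑ u ∈ Finset.range (r (N - 1)),
          ∑ b ∈ Finset.range (∏ t ∈ Finset.Ico (N - 1) N, I (t + 1)),
            matExt ((Q (N - 1))ᵀ * Amat (N - 1)) u b ^ 2 := by
    have h1 : ∀ x : (k : Fin N) → Fin (I ((k : ℕ) + 1)),
        A x * B x = ∑ u ∈ Finset.range (r (N - 1)),
          A x * (PhiTT I r Q x (N - 1) u *
            matExt ((Q (N - 1))ᵀ * Amat (N - 1)) u (pv x (N - 1))) := by
      intro x
      rw [hBphi x, Finset.mul_sum]
    rw [Finset.sum_congr rfl fun x _ => h1 x, Finset.sum_comm]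
    refine Finset.sum_congr rfl fun u _ => ?_
    have h2 : ∀ x : (k : Fin N) → Fin (I ((k : ℕ) + 1)),
        A x * (PhiTT I r Q x (N - 1) u *
          matExt ((Q (N - 1))ᵀ * Amat (N - 1)) u (pv x (N - 1)))
        = ∑ b ∈ Finset.range (∏ t ∈ Finset.Ico (N - 1) N, I (t + 1)),
            (if ttCode I x (N - 1) N = b then PhiTT I r Q x (N - 1) u * A x else 0) *
              matExt ((Q (N - 1))ᵀ * Amat (N - 1)) u b := by
      intro x
      rw [Finset.sum_eq_single_of_mem (ttCode I x (N - 1) N)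
        (Finset.mem_range.2 (ttCode_lt x N (N - 1) (by omega)))]
      · rw [if_pos rfl, ttCode_last x (by omega)]
        ring
      · intro b' _ hne
        rw [if_neg (fun hc => hne hc.symm), zero_mul]
    rw [Finset.sum_congr rfl fun x _ => h2 x, Finset.sum_comm]
    refine Finset.sum_congr rfl fun b _ => ?_
    rw [← Finset.sum_mul, ← claim (N - 1) (by omega) le_rfl u b]
    ring
  -- ∑ B·B = ∑∑ G²
  have hBB : (∑ x : (k : Fin N) → Fin (I ((k : ℕ) + 1)), B x * B x)
      = ∑ u ∈ Finset.range (r (N - 1)),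
          ∑ b ∈ Finset.range (∏ t ∈ Finset.Ico (N - 1) N, I (t + 1)),
            matExt ((Q (N - 1))ᵀ * Amat (N - 1)) u b ^ 2 := by
    have h1 : ∀ x : (k : Fin N) → Fin (I ((k : ℕ) + 1)),
        B x * B x = ∑ u ∈ Finset.range (r (N - 1)), ∑ v ∈ Finset.range (r (N - 1)),
          (PhiTT I r Q x (N - 1) u *
            matExt ((Q (N - 1))ᵀ * Amat (N - 1)) u (pv x (N - 1))) *
          (PhiTT I r Q x (N - 1) v *
            matExt ((Q (N - 1))ᵀ * Amat (N - 1)) v (pv x (N - 1))) := by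
      intro x
      rw [hBphi x, Finset.sum_mul_sum]
    rw [Finset.sum_congr rfl fun x _ => h1 x, Finset.sum_comm]
    refine Finset.sum_congr rfl fun u hu => ?_
    have h2 : ∀ x : (k : Fin N) → Fin (I ((k : ℕ) + 1)),
        (∑ v ∈ Finset.range (r (N - 1)),
          (PhiTT I r Q x (N - 1) u *
            matExt ((Q (N - 1))ᵀ * Amat (N - 1)) u (pv x (N - 1))) *
          (PhiTT I r Q x (N - 1) v *
            matExt ((Q (N - 1))ᵀ * Amat (N - 1)) v (pv x (N - 1))))
        = ∑ v ∈ Finset.range (r (N - 1)),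
            ∑ b ∈ Finset.range (∏ t ∈ Finset.Ico (N - 1) N, I (t + 1)),
              (if ttCode I x (N - 1) N = b then
                PhiTT I r Q x (N - 1) u * PhiTT I r Q x (N - 1) v else 0) *
                (matExt ((Q (N - 1))ᵀ * Amat (N - 1)) u b *
                  matExt ((Q (N - 1))ᵀ * Amat (N - 1)) v b) := by
      intro x
      refine Finset.sum_congr rfl fun v _ => ?_
      rw [Finset.sum_eq_single_of_mem (ttCode I x (N - 1) N)
        (Finset.mem_range.2 (ttCode_lt x N (N - 1) (by omega)))]
      · rw [if_pos rfl, ttCode_last x (by omega)]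
        ring
      · intro b' _ hne
        rw [if_neg (fun hc => hne hc.symm), zero_mul]
    rw [Finset.sum_congr rfl fun x _ => h2 x, Finset.sum_comm]
    have h3 : ∀ v ∈ Finset.range (r (N - 1)),
        (∑ x : (k : Fin N) → Fin (I ((k : ℕ) + 1)),
          ∑ b ∈ Finset.range (∏ t ∈ Finset.Ico (N - 1) N, I (t + 1)),
            (if ttCode I x (N - 1) N = b then
              PhiTT I r Q x (N - 1) u * PhiTT I r Q x (N - 1) v else 0) *
              (matExt ((Q (N - 1))ᵀ * Amat (N - 1)) u b *
                matExt ((Q (N - 1))ᵀ * Amat (N - 1)) v b))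
        = ∑ b ∈ Finset.range (∏ t ∈ Finset.Ico (N - 1) N, I (t + 1)),
            (if u = v ∧ u < r (N - 1) then 1 else 0) *
              (matExt ((Q (N - 1))ᵀ * Amat (N - 1)) u b *
                matExt ((Q (N - 1))ᵀ * Amat (N - 1)) v b) := by
      intro v _
      rw [Finset.sum_comm]
      refine Finset.sum_congr rfl fun b hb => ?_
      rw [← Finset.sum_mul, orth (N - 1) (by omega) le_rfl u v b (Finset.mem_range.1 hb)]
    rw [Finset.sum_congr rfl h3]
    rw [Finset.sum_eq_single_of_mem u hu]
    · rw [if_pos ⟨rfl, Finset.mem_range.1 hu⟩]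
      refine Finset.sum_congr rfl fun b _ => ?_
      ring
    · intro v _ hne
      rw [if_neg (fun hc => hne hc.1.symm)]
      refine Finset.sum_eq_zero fun b _ => ?_
      rw [zero_mul]
  -- reshape norm identity
  have hnext : ∀ n, 1 ≤ n → n + 1 ≤ N - 1 →
      frobNorm (Amat (n + 1)) ^ 2 = frobNorm ((Q n)ᵀ * Amat n) ^ 2 := by
    intro n h1 h2
    rw [frobsq (Amat (n + 1)), frobsq ((Q n)ᵀ * Amat n)]
    have e0 : (∑ a ∈ Finset.range (r (n + 1 - 1) * I (n + 1)),
          ∑ c ∈ Finset.range (∏ t ∈ Finset.Ico (n + 1) N, I (t + 1)),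
            matExt (Amat (n + 1)) a c ^ 2)
        = ∑ a ∈ Finset.range (r n * I (n + 1)),
          ∑ c ∈ Finset.range (∏ t ∈ Finset.Ico (n + 1) N, I (t + 1)),
            matExt (Amat (n + 1)) a c ^ 2 := rfl
    rw [e0, sum_range_mul_split (r n) (I (n + 1))
      (fun a => ∑ c ∈ Finset.range (∏ t ∈ Finset.Ico (n + 1) N, I (t + 1)),
        matExt (Amat (n + 1)) a c ^ 2)]
    have e1 : ∀ t ∈ Finset.range (r n), ∀ i ∈ Finset.range (I (n + 1)),
        (∑ c ∈ Finset.range (∏ t ∈ Finset.Ico (n + 1) N, I (t + 1)),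
          matExt (Amat (n + 1)) (t + r n * i) c ^ 2)
        = ∑ c ∈ Finset.range (∏ t ∈ Finset.Ico (n + 1) N, I (t + 1)),
            matExt ((Q n)ᵀ * Amat n) t (i + I (n + 1) * c) ^ 2 := by
      intro t ht i hi
      refine Finset.sum_congr rfl fun c hc => ?_
      rw [hrec' n h1 h2 t i c (Finset.mem_range.1 ht) (Finset.mem_range.1 hi)
        (Finset.mem_range.1 hc)]
    rw [Finset.sum_congr rfl fun t ht => Finset.sum_congr rfl fun i hi => e1 t ht i hi]
    refine (Finset.sum_congr rfl fun t _ => ?_).symm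
    have e2 : (∑ c ∈ Finset.range (∏ t ∈ Finset.Ico n N, I (t + 1)),
          matExt ((Q n)ᵀ * Amat n) t c ^ 2)
        = ∑ c ∈ Finset.range (I (n + 1) * ∏ t ∈ Finset.Ico (n + 1) N, I (t + 1)),
            matExt ((Q n)ᵀ * Amat n) t c ^ 2 := by
      refine Finset.sum_congr ?_ fun c _ => rfl
      rw [prodIco_split (show n < N by omega)]
    rw [e2, sum_range_mul_split (I (n + 1)) (∏ t ∈ Finset.Ico (n + 1) N, I (t + 1))
      (fun c => matExt ((Q n)ᵀ * Amat n) t c ^ 2)]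
  -- telescoping
  have htel : (∑ n ∈ Finset.Icc 1 (N - 1),
        (frobNorm (Amat n) ^ 2 - frobNorm ((Q n)ᵀ * Amat n) ^ 2))
      = frobNorm (Amat 1) ^ 2 - frobNorm ((Q (N - 1))ᵀ * Amat (N - 1)) ^ 2 := by
    have hIcc : (∑ n ∈ Finset.Icc 1 (N - 1),
          (frobNorm (Amat n) ^ 2 - frobNorm ((Q n)ᵀ * Amat n) ^ 2))
        = ∑ k ∈ Finset.range (N - 1),
            (frobNorm (Amat (1 + k)) ^ 2 - frobNorm ((Q (1 + k))ᵀ * Amat (1 + k)) ^ 2) := by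
      have hset : Finset.Icc 1 (N - 1) = Finset.Ico 1 N := by
        rw [← Finset.Ico_add_one_right_eq_Icc]
        congr 1
        omega
      rw [hset, Finset.sum_Ico_eq_sum_range]
    set φ : ℕ → ℝ := fun k => if k ≤ N - 2 then frobNorm (Amat (k + 1)) ^ 2
      else frobNorm ((Q (N - 1))ᵀ * Amat (N - 1)) ^ 2 with hφ
    have hterm : ∀ k ∈ Finset.range (N - 1),
        (frobNorm (Amat (1 + k)) ^ 2 - frobNorm ((Q (1 + k))ᵀ * Amat (1 + k)) ^ 2)
        = φ k - φ (k + 1) := by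
      intro k hk
      have hkN := Finset.mem_range.1 hk
      have hk2 : k ≤ N - 2 := by omega
      have e1 : φ k = frobNorm (Amat (k + 1)) ^ 2 := by
        simp only [hφ]
        exact if_pos hk2
      have hadd : 1 + k = k + 1 := by omega
      rw [e1, hadd]
      congr 1
      by_cases hk3 : k + 1 ≤ N - 2
      · have e2 : φ (k + 1) = frobNorm (Amat (k + 1 + 1)) ^ 2 := by
          simp only [hφ]
          exact if_pos hk3
        rw [e2, hnext (k + 1) (by omega) (by omega)]
      · have hk4 : k + 1 = N - 1 := by omega
        have e2 : φ (k + 1) = frobNorm ((Q (N - 1))ᵀ * Amat (N - 1)) ^ 2 := by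
          simp only [hφ]
          exact if_neg hk3
        rw [e2, hk4]
    rw [hIcc, Finset.sum_congr rfl hterm, Finset.sum_range_sub' φ (N - 1)]
    have e0 : φ 0 = frobNorm (Amat 1) ^ 2 := by
      simp only [hφ]
      have h02 : (0 : ℕ) ≤ N - 2 := by omega
      rw [if_pos h02]
    have eN : φ (N - 1) = frobNorm ((Q (N - 1))ᵀ * Amat (N - 1)) ^ 2 := by
      simp only [hφ]
      exact if_neg (by omega)
    rw [e0, eN]
  -- final assembly
  rw [tsq, htel]
  have hexp : ∀ x : (k : Fin N) → Fin (I ((k : ℕ) + 1)),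
      (A x - B x) ^ 2 = A x ^ 2 - 2 * (A x * B x) + B x * B x := fun x => by ring
  rw [Finset.sum_congr rfl fun x _ => hexp x, Finset.sum_add_distrib,
    Finset.sum_sub_distrib, ← Finset.mul_sum, hA2, hAB, hBB]
  have hG : (∑ u ∈ Finset.range (r (N - 1)),
        ∑ b ∈ Finset.range (∏ t ∈ Finset.Ico (N - 1) N, I (t + 1)),
          matExt ((Q (N - 1))ᵀ * Amat (N - 1)) u b ^ 2)
      = frobNorm ((Q (N - 1))ᵀ * Amat (N - 1)) ^ 2 :=
    (frobsq ((Q (N - 1))ᵀ * Amat (N - 1))).symm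
  rw [hG]
  linarith
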